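/- Consider h : ℝ³ → ℝ³ defined by h(x) = (sgn(x₂+x₃−2x₁), sgn(x₁+x₃−2x₂), sgn(x₁+x₂−2x₃)). Let η₀ ∈ ℝ and let g : [0,∞) → ℝ be measurable with |g(t)| ≤ 1/3 for almost every t, and set η(t) = η₀ + ∫₀ᵗ g(s) ds. Then x(t) = η(t)·(1,1,1) is a Filippov solution of ẋ = h(x) on [0,∞). Consequently, Filippov solutions of this system starting in the consensus line span{(1,1,1)} need not converge to a static vector. -/

import Mathlib

open MeasureTheory Set
open scoped ENNReal

noncomputable def eBall {ι : Type*} [Fintype ι] (x : ι → ℝ) (δ : ℝ) : Set (ι → ℝ) :=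
  {y | Real.sqrt (∑ i, (y i - x i) ^ 2) < δ}

noncomputable def filippov {ι κ : Type*} [Fintype ι] [Fintype κ]
    (h : (ι → ℝ) → (κ → ℝ)) (x : ι → ℝ) : Set (κ → ℝ) :=
  ⋂ (δ : ℝ) (_ : 0 < δ) (S : Set (ι → ℝ)) (_ : volume S = 0),
    closure (convexHull ℝ (h '' (eBall x δ \ S)))

/-- A Filippov solution of `ẋ = h(x)` on `[0, ∞)`. -/
def IsFilippovSolution {ι : Type*} [Fintype ι] (h : (ι → ℝ) → (ι → ℝ))
    (x : ℝ → (ι → ℝ)) : Prop :=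
  ∃ v : ℝ → (ι → ℝ),
    LocallyIntegrableOn v (Ici 0) volume ∧
    (∀ t, 0 ≤ t → x t = x 0 + ∫ s in (0:ℝ)..t, v s) ∧
    ∀ᵐ t ∂(volume.restrict (Ici (0:ℝ))), v t ∈ filippov h (x t)

noncomputable def ssign (s : ℝ) : ℝ := if 0 < s then 1 else if s < 0 then -1 else 0

/-- The three-node example system
`h(x) = (sgn(x₂+x₃−2x₁), sgn(x₁+x₃−2x₂), sgn(x₁+x₂−2x₃))`. -/
noncomputable def hex (x : Fin 3 → ℝ) : Fin 3 → ℝ :=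
  ![ssign (x 1 + x 2 - 2 * x 0), ssign (x 0 + x 2 - 2 * x 1), ssign (x 0 + x 1 - 2 * x 2)]

lemma ssign_pos {s : ℝ} (h : 0 < s) : ssign s = 1 := if_pos h
lemma ssign_neg {s : ℝ} (h : s < 0) : ssign s = -1 := by
  rw [ssign, if_neg (asymm h), if_pos h]

lemma exists_in_box_diff (l u : Fin 3 → ℝ) (h : ∀ j, l j < u j) {S : Set (Fin 3 → ℝ)}
    (hS : volume S = 0) : ∃ y, (∀ j, y j ∈ Ioo (l j) (u j)) ∧ y ∉ S := by
  have hbox : volume (Set.pi univ fun j => Ioo (l j) (u j)) ≠ 0 := by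
    rw [volume_pi_pi]
    simp only [Real.volume_Ioo]
    refine Finset.prod_ne_zero_iff.mpr fun j _ => ?_
    exact (ENNReal.ofReal_pos.mpr (sub_pos.mpr (h j))).ne'
  have : ((Set.pi univ fun j => Ioo (l j) (u j)) \ S).Nonempty := by
    by_contra hne
    rw [Set.not_nonempty_iff_eq_empty, Set.diff_eq_empty] at hne
    exact hbox (le_antisymm ((measure_mono hne).trans hS.le) zero_le)
  obtain ⟨y, hy, hyS⟩ := this
  exact ⟨y, fun j => hy j (mem_univ j), hyS⟩

lemma hex_mem_image (c δ : ℝ) (hδ : 0 < δ) {S : Set (Fin 3 → ℝ)} (hS : volume S = 0)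
    (l u : Fin 3 → ℝ) (h : ∀ j, l j < u j)
    (hsub : ∀ j, Ioo (l j) (u j) ⊆ Ioo (c - δ/2) (c + δ/2))
    (p : Fin 3 → ℝ)
    (hp : ∀ y : Fin 3 → ℝ, (∀ j, y j ∈ Ioo (l j) (u j)) → hex y = p) :
    p ∈ hex '' (eBall (fun _ => c) δ \ S) := by
  obtain ⟨y, hy, hyS⟩ := exists_in_box_diff l u h hS
  refine ⟨y, ⟨?_, hyS⟩, hp y hy⟩
  have hb : ∀ j, (y j - c) ^ 2 < (δ/2) ^ 2 := by
    intro j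
    have h' := hsub j (hy j)
    exact sq_lt_sq' (by linarith [h'.1]) (by linarith [h'.2])
  simp only [eBall, mem_setOf_eq]
  rw [Fin.sum_univ_three, Real.sqrt_lt' hδ]
  have e : (δ/2)^2 = δ^2/4 := by ring
  have hδ2 : 0 < δ ^ 2 := by positivity
  linarith [hb 0, hb 1, hb 2]

set_option maxHeartbeats 1000000 in
lemma mem_filippov_consensus (c a : ℝ) (ha : |a| ≤ 1/3) :
    (fun _ : Fin 3 => a) ∈ filippov hex (fun _ : Fin 3 => c) := by
  rw [filippov]
  simp only [mem_iInter]
  intro δ hδ S hS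
  set K := convexHull ℝ (hex '' (eBall (fun _ : Fin 3 => c) δ \ S)) with hKdef
  have hKconv : Convex ℝ K := convex_convexHull _ _
  have m1 : (![1,1,-1] : Fin 3 → ℝ) ∈ K := by
    refine subset_convexHull _ _ (hex_mem_image c δ hδ hS
      ![c - δ/24, c - δ/24, c + δ/3] ![c + δ/24, c + δ/24, c + δ/2] ?_ ?_ _ ?_)
    · intro j; fin_cases j <;> simp <;> linarith
    · intro j; fin_cases j <;> intro z hz <;> simp at hz ⊢ <;>
        exact ⟨by linarith [hz.1], by linarith [hz.2]⟩
    · intro y hy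
      have b0 := hy 0; have b1 := hy 1; have b2 := hy 2
      simp only [Matrix.cons_val_zero, Matrix.cons_val_one, Matrix.head_cons,
        Matrix.cons_val_two, Matrix.tail_cons, mem_Ioo] at b0 b1 b2
      funext j; fin_cases j <;>
        simp only [hex, Matrix.cons_val_zero, Matrix.cons_val_one, Matrix.head_cons,
          Matrix.cons_val_two, Matrix.tail_cons]
      · exact ssign_pos (by linarith [b0.1, b0.2, b1.1, b1.2, b2.1, b2.2, hδ])
      · exact ssign_pos (by linarith [b0.1, b0.2, b1.1, b1.2, b2.1, b2.2, hδ])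
      · exact ssign_neg (by linarith [b0.1, b0.2, b1.1, b1.2, b2.1, b2.2, hδ])
  have m2 : (![1,-1,1] : Fin 3 → ℝ) ∈ K := by
    refine subset_convexHull _ _ (hex_mem_image c δ hδ hS
      ![c - δ/24, c + δ/3, c - δ/24] ![c + δ/24, c + δ/2, c + δ/24] ?_ ?_ _ ?_)
    · intro j; fin_cases j <;> simp <;> linarith
    · intro j; fin_cases j <;> intro z hz <;> simp at hz ⊢ <;>
        exact ⟨by linarith [hz.1], by linarith [hz.2]⟩
    · intro y hy
      have b0 := hy 0; have b1 := hy 1; have b2 := hy 2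
      simp only [Matrix.cons_val_zero, Matrix.cons_val_one, Matrix.head_cons,
        Matrix.cons_val_two, Matrix.tail_cons, mem_Ioo] at b0 b1 b2
      funext j; fin_cases j <;>
        simp only [hex, Matrix.cons_val_zero, Matrix.cons_val_one, Matrix.head_cons,
          Matrix.cons_val_two, Matrix.tail_cons]
      · exact ssign_pos (by linarith [b0.1, b0.2, b1.1, b1.2, b2.1, b2.2, hδ])
      · exact ssign_neg (by linarith [b0.1, b0.2, b1.1, b1.2, b2.1, b2.2, hδ])
      · exact ssign_pos (by linarith [b0.1, b0.2, b1.1, b1.2, b2.1, b2.2, hδ])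
  have m3 : (![-1,1,1] : Fin 3 → ℝ) ∈ K := by
    refine subset_convexHull _ _ (hex_mem_image c δ hδ hS
      ![c + δ/3, c - δ/24, c - δ/24] ![c + δ/2, c + δ/24, c + δ/24] ?_ ?_ _ ?_)
    · intro j; fin_cases j <;> simp <;> linarith
    · intro j; fin_cases j <;> intro z hz <;> simp at hz ⊢ <;>
        exact ⟨by linarith [hz.1], by linarith [hz.2]⟩
    · intro y hy
      have b0 := hy 0; have b1 := hy 1; have b2 := hy 2
      simp only [Matrix.cons_val_zero, Matrix.cons_val_one, Matrix.head_cons,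
        Matrix.cons_val_two, Matrix.tail_cons, mem_Ioo] at b0 b1 b2
      funext j; fin_cases j <;>
        simp only [hex, Matrix.cons_val_zero, Matrix.cons_val_one, Matrix.head_cons,
          Matrix.cons_val_two, Matrix.tail_cons]
      · exact ssign_neg (by linarith [b0.1, b0.2, b1.1, b1.2, b2.1, b2.2, hδ])
      · exact ssign_pos (by linarith [b0.1, b0.2, b1.1, b1.2, b2.1, b2.2, hδ])
      · exact ssign_pos (by linarith [b0.1, b0.2, b1.1, b1.2, b2.1, b2.2, hδ])
  have m4 : (![-1,-1,1] : Fin 3 → ℝ) ∈ K := by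
    refine subset_convexHull _ _ (hex_mem_image c δ hδ hS
      ![c - δ/24, c - δ/24, c - δ/2] ![c + δ/24, c + δ/24, c - δ/3] ?_ ?_ _ ?_)
    · intro j; fin_cases j <;> simp <;> linarith
    · intro j; fin_cases j <;> intro z hz <;> simp at hz ⊢ <;>
        exact ⟨by linarith [hz.1], by linarith [hz.2]⟩
    · intro y hy
      have b0 := hy 0; have b1 := hy 1; have b2 := hy 2
      simp only [Matrix.cons_val_zero, Matrix.cons_val_one, Matrix.head_cons,
        Matrix.cons_val_two, Matrix.tail_cons, mem_Ioo] at b0 b1 b2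
      funext j; fin_cases j <;>
        simp only [hex, Matrix.cons_val_zero, Matrix.cons_val_one, Matrix.head_cons,
          Matrix.cons_val_two, Matrix.tail_cons]
      · exact ssign_neg (by linarith [b0.1, b0.2, b1.1, b1.2, b2.1, b2.2, hδ])
      · exact ssign_neg (by linarith [b0.1, b0.2, b1.1, b1.2, b2.1, b2.2, hδ])
      · exact ssign_pos (by linarith [b0.1, b0.2, b1.1, b1.2, b2.1, b2.2, hδ])
  have m5 : (![-1,1,-1] : Fin 3 → ℝ) ∈ K := by
    refine subset_convexHull _ _ (hex_mem_image c δ hδ hS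
      ![c - δ/24, c - δ/2, c - δ/24] ![c + δ/24, c - δ/3, c + δ/24] ?_ ?_ _ ?_)
    · intro j; fin_cases j <;> simp <;> linarith
    · intro j; fin_cases j <;> intro z hz <;> simp at hz ⊢ <;>
        exact ⟨by linarith [hz.1], by linarith [hz.2]⟩
    · intro y hy
      have b0 := hy 0; have b1 := hy 1; have b2 := hy 2
      simp only [Matrix.cons_val_zero, Matrix.cons_val_one, Matrix.head_cons,
        Matrix.cons_val_two, Matrix.tail_cons, mem_Ioo] at b0 b1 b2
      funext j; fin_cases j <;>
        simp only [hex, Matrix.cons_val_zero, Matrix.cons_val_one, Matrix.head_cons,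
          Matrix.cons_val_two, Matrix.tail_cons]
      · exact ssign_neg (by linarith [b0.1, b0.2, b1.1, b1.2, b2.1, b2.2, hδ])
      · exact ssign_pos (by linarith [b0.1, b0.2, b1.1, b1.2, b2.1, b2.2, hδ])
      · exact ssign_neg (by linarith [b0.1, b0.2, b1.1, b1.2, b2.1, b2.2, hδ])
  have m6 : (![1,-1,-1] : Fin 3 → ℝ) ∈ K := by
    refine subset_convexHull _ _ (hex_mem_image c δ hδ hS
      ![c - δ/2, c - δ/24, c - δ/24] ![c - δ/3, c + δ/24, c + δ/24] ?_ ?_ _ ?_)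
    · intro j; fin_cases j <;> simp <;> linarith
    · intro j; fin_cases j <;> intro z hz <;> simp at hz ⊢ <;>
        exact ⟨by linarith [hz.1], by linarith [hz.2]⟩
    · intro y hy
      have b0 := hy 0; have b1 := hy 1; have b2 := hy 2
      simp only [Matrix.cons_val_zero, Matrix.cons_val_one, Matrix.head_cons,
        Matrix.cons_val_two, Matrix.tail_cons, mem_Ioo] at b0 b1 b2
      funext j; fin_cases j <;>
        simp only [hex, Matrix.cons_val_zero, Matrix.cons_val_one, Matrix.head_cons,
          Matrix.cons_val_two, Matrix.tail_cons]
      · exact ssign_pos (by linarith [b0.1, b0.2, b1.1, b1.2, b2.1, b2.2, hδ])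
      · exact ssign_neg (by linarith [b0.1, b0.2, b1.1, b1.2, b2.1, b2.2, hδ])
      · exact ssign_neg (by linarith [b0.1, b0.2, b1.1, b1.2, b2.1, b2.2, hδ])
  have qp : (fun _ : Fin 3 => (1/3:ℝ)) ∈ K := by
    have hmid := hKconv m2 m3 (by norm_num : (0:ℝ) ≤ 1/2) (by norm_num : (0:ℝ) ≤ 1/2)
      (by norm_num)
    have h := hKconv m1 hmid (by norm_num : (0:ℝ) ≤ 1/3) (by norm_num : (0:ℝ) ≤ 2/3)
      (by norm_num)
    have e : (1/3:ℝ) • (![1,1,-1] : Fin 3 → ℝ) +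
        (2/3:ℝ) • ((1/2:ℝ) • (![1,-1,1] : Fin 3 → ℝ) + (1/2:ℝ) • (![-1,1,1] : Fin 3 → ℝ)) =
        fun _ : Fin 3 => (1/3:ℝ) := by
      funext j; fin_cases j <;> simp <;> norm_num
    rwa [e] at h
  have qm : (fun _ : Fin 3 => (-(1/3):ℝ)) ∈ K := by
    have hmid := hKconv m5 m6 (by norm_num : (0:ℝ) ≤ 1/2) (by norm_num : (0:ℝ) ≤ 1/2)
      (by norm_num)
    have h := hKconv m4 hmid (by norm_num : (0:ℝ) ≤ 1/3) (by norm_num : (0:ℝ) ≤ 2/3)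
      (by norm_num)
    have e : (1/3:ℝ) • (![-1,-1,1] : Fin 3 → ℝ) +
        (2/3:ℝ) • ((1/2:ℝ) • (![-1,1,-1] : Fin 3 → ℝ) + (1/2:ℝ) • (![1,-1,-1] : Fin 3 → ℝ)) =
        fun _ : Fin 3 => (-(1/3):ℝ) := by
      funext j; fin_cases j <;> simp <;> norm_num
    rwa [e] at h
  have hab := abs_le.mp ha
  have h := hKconv qp qm (show (0:ℝ) ≤ (1+3*a)/2 by linarith [hab.1])
    (show (0:ℝ) ≤ (1-3*a)/2 by linarith [hab.2]) (by ring)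
  have e : ((1+3*a)/2) • (fun _ : Fin 3 => (1/3:ℝ)) +
      ((1-3*a)/2) • (fun _ : Fin 3 => (-(1/3):ℝ)) = fun _ : Fin 3 => a := by
    funext j; simp; ring
  rw [e] at h
  exact subset_closure h

/-- **Non-static Filippov solutions on the consensus line for the 3-node example.**
For any `η₀ ∈ ℝ` and any measurable `g` with `|g(t)| ≤ 1/3` for a.e. `t ≥ 0`, the curve
`x(t) = (η₀ + ∫₀ᵗ g) · (1,1,1)` is a Filippov solution of `ẋ = h(x)` on `[0, ∞)`;
hence Filippov solutions starting on the consensus line need not converge to a static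
vector. -/
theorem filippov_solution_drifting_on_consensus_line
    (η₀ : ℝ) (g : ℝ → ℝ) (hg : Measurable g)
    (hbd : ∀ᵐ t ∂(volume.restrict (Ici (0:ℝ))), |g t| ≤ 1/3) :
    IsFilippovSolution hex (fun t => fun _ : Fin 3 => η₀ + ∫ s in (0:ℝ)..t, g s) := by
  set v : ℝ → (Fin 3 → ℝ) := fun t => fun _ : Fin 3 => g t with hv
  have hvm : Measurable v := measurable_pi_lambda _ (fun _ => hg)
  have hint : ∀ (k : Set ℝ), k ⊆ Ici 0 → volume k ≠ ⊤ → IntegrableOn v k volume := by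
    intro k hk hfin
    have hbd' : ∀ᵐ t ∂(volume.restrict k), |g t| ≤ 1/3 :=
      ae_restrict_of_ae_restrict_of_subset hk hbd
    haveI : IsFiniteMeasure (volume.restrict k) :=
      ⟨by rw [Measure.restrict_apply_univ]; exact lt_top_iff_ne_top.mpr hfin⟩
    refine Integrable.mono' (integrable_const (1:ℝ)) hvm.aestronglyMeasurable ?_
    filter_upwards [hbd'] with t ht
    rw [pi_norm_le_iff_of_nonneg (by norm_num : (0:ℝ) ≤ 1)]
    intro i
    simpa using ht.trans (by norm_num)
  have hloc : LocallyIntegrableOn v (Ici 0) volume := by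
    intro t ht
    refine ⟨Ici 0 ∩ Icc (t-1) (t+1), ?_, ?_⟩
    · exact inter_mem_nhdsWithin _ (Icc_mem_nhds (by linarith) (by linarith))
    · exact hint _ inter_subset_left
        (lt_of_le_of_lt (measure_mono inter_subset_right) (by simp)).ne
  have hii : ∀ t : ℝ, 0 ≤ t → IntervalIntegrable v volume 0 t := by
    intro t htt
    rw [intervalIntegrable_iff, uIoc_of_le htt]
    exact hint _ (fun s hs => le_of_lt hs.1) (by simp)
  have happ : ∀ t : ℝ, 0 ≤ t → ∀ i : Fin 3,
      (∫ s in (0:ℝ)..t, v s) i = ∫ s in (0:ℝ)..t, g s := by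
    intro t htt i
    have := (ContinuousLinearMap.proj (R := ℝ) (φ := fun _ : Fin 3 => ℝ)
      i).intervalIntegral_comp_comm (hii t htt)
    simpa using this.symm
  refine ⟨v, hloc, ?_, ?_⟩
  · intro t ht
    funext i
    simp only [Pi.add_apply, intervalIntegral.integral_same]
    rw [happ t ht i]
    ring
  · filter_upwards [hbd] with t ht
    exact mem_filippov_consensus _ _ ht
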